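/- Let A be an invertible linear map of ℝ^d, let L₀ ⊆ ℝ^d be a nonzero A-invariant linear subspace, let λ₀ < 0 and ε ∈ (0, −λ₀). Let G, H : ℝ^d → ℝ^d be bijections with H ∘ G = A ∘ H and sup_{x∈ℝ^d} ‖H(x) − x‖ ≤ C for some C ≥ 0, and set S := H^{−1}(L₀), noting that G(S) = S. Suppose there is a function ρ : S × S → [0, ∞) such that: (i) ρ(x,y) ≥ ‖x − y‖ for all x, y ∈ S; (ii) there are constants a₀, b₀ > 0 with ρ(x,y) ≤ a₀·‖x − y‖ + b₀ for all x, y ∈ S; (iii) e^{λ₀−ε}·ρ(x,y) ≤ ρ(G(x), G(y)) ≤ e^{λ₀+ε}·ρ(x,y) for all x, y ∈ S. Then every complex eigenvalue λ of the restriction of A to L₀ satisfies λ₀ − ε ≤ log|λ| ≤ λ₀ + ε. -/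

import Mathlib

open Matrix

private lemma aux_le_of_pow_le {x r : ℝ} (D : ℝ) (hx : 0 ≤ x) (hr : 0 < r)
    (h : ∀ n : ℕ, 1 ≤ n → x ^ n ≤ D * r ^ n) : x ≤ r := by
  by_contra hc
  push_neg at hc
  have h1 : 1 < x / r := (one_lt_div hr).2 hc
  obtain ⟨n, hn⟩ := pow_unbounded_of_one_lt D h1
  have hkey : (x / r) ^ (max n 1) ≤ D := by
    rw [div_pow, div_le_iff₀ (pow_pos hr _)]
    exact h _ (le_max_right n 1)
  have h2 : (x / r) ^ n ≤ (x / r) ^ (max n 1) :=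
    pow_le_pow_right₀ h1.le (le_max_left n 1)
  linarith

private lemma aux_le_of_forall_t {X Y D : ℝ} (h : ∀ t : ℝ, 0 < t → t * X ≤ t * Y + D) : X ≤ Y := by
  by_contra hc
  push_neg at hc
  have hXY : 0 < X - Y := sub_pos.2 hc
  set t := (|D| + 1) / (X - Y) with ht
  have htpos : 0 < t := div_pos (by positivity) hXY
  have h2 : t * (X - Y) = |D| + 1 := div_mul_cancel₀ _ hXY.ne'
  have h3 : t * X - t * Y = |D| + 1 := by rw [← mul_sub]; exact h2
  have h4 := h t htpos
  have := le_abs_self D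
  linarith

private lemma aux_eigen_bound {m : ℕ} (M : Matrix (Fin m) (Fin m) ℝ) (lam : ℂ)
    (v : Fin m → ℂ) (hv : v ≠ 0)
    (hev : (M.map (algebraMap ℝ ℂ)) *ᵥ v = lam • v)
    {c r : ℝ} (hr : 0 < r) (hM : ∀ n : ℕ, 1 ≤ n → ∀ i j, |(M ^ n) i j| ≤ c * r ^ n) :
    ‖lam‖ ≤ r := by
  have hmap : ∀ n : ℕ, (M ^ n).map (algebraMap ℝ ℂ) = (M.map (algebraMap ℝ ℂ)) ^ n := by
    intro n
    simp only [← RingHom.mapMatrix_apply, map_pow]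
  have hpow : ∀ n : ℕ, (M.map (algebraMap ℝ ℂ)) ^ n *ᵥ v = lam ^ n • v := by
    intro n
    induction n with
    | zero => simp
    | succ n ih =>
      rw [pow_succ, ← Matrix.mulVec_mulVec, hev, Matrix.mulVec_smul, ih, smul_smul, ← pow_succ']
  have hm : Nonempty (Fin m) := by
    rcases isEmpty_or_nonempty (Fin m) with h | h
    · exact absurd (Subsingleton.elim v 0) hv
    · exact h
  obtain ⟨k, -, hk⟩ := Finset.exists_max_image Finset.univ (fun i => ‖v i‖)
      Finset.univ_nonempty
  have hk' : ∀ j, ‖v j‖ ≤ ‖v k‖ := fun j => hk j (Finset.mem_univ j)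
  have hvk : 0 < ‖v k‖ := by
    rcases Function.ne_iff.1 hv with ⟨i, hi⟩
    exact lt_of_lt_of_le (norm_pos_iff.2 (by simpa using hi)) (hk' i)
  apply aux_le_of_pow_le (m * c) (norm_nonneg lam) hr
  intro n hn
  have h1 : lam ^ n * v k = ∑ j, ((algebraMap ℝ ℂ) ((M ^ n) k j)) * v j := by
    have h0 := congrFun (hpow n) k
    rw [← hmap n] at h0
    simpa [Matrix.mulVec, dotProduct, Matrix.map_apply] using h0.symm
  have h2 : (‖lam‖) ^ n * ‖v k‖ ≤ (↑m * c * r ^ n) * ‖v k‖ := by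
    calc (‖lam‖) ^ n * ‖v k‖
        = ‖lam ^ n * v k‖ := by rw [norm_mul, norm_pow]
      _ = ‖∑ j, ((algebraMap ℝ ℂ) ((M ^ n) k j)) * v j‖ := by rw [h1]
      _ ≤ ∑ j, ‖((algebraMap ℝ ℂ) ((M ^ n) k j)) * v j‖ :=
          norm_sum_le _ _
      _ ≤ ∑ _j : Fin m, (c * r ^ n) * ‖v k‖ := by
          apply Finset.sum_le_sum
          intro j _
          rw [norm_mul]
          have e1 : ‖(algebraMap ℝ ℂ) ((M ^ n) k j)‖ = |(M ^ n) k j| := by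
            simp [Real.norm_eq_abs]
          rw [e1]
          exact mul_le_mul (hM n hn k j) (hk' j) (norm_nonneg _)
            (le_trans (abs_nonneg _) (hM n hn k j))
      _ = (↑m * c * r ^ n) * ‖v k‖ := by
          rw [Finset.sum_const, Finset.card_univ, Fintype.card_fin]
          push_cast
          ring
  have := le_of_mul_le_mul_right h2 hvk
  calc (‖lam‖) ^ n ≤ ↑m * c * r ^ n := this
    _ = (↑m * c) * r ^ n := by ring

/-- A leafwise metric `ρ` on `S = H⁻¹(L₀)`, quasi-isometric to the ambient
distance and contracted by `G` at rates pinched between `e^{λ₀-ε}` and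
`e^{λ₀+ε}`, forces every complex eigenvalue `λ` of the restriction of the
linear model `A` to `L₀` to satisfy `λ₀ - ε ≤ log|λ| ≤ λ₀ + ε`. -/
theorem stmt_9 (d : ℕ) (A : (Fin d → ℝ) ≃ₗ[ℝ] (Fin d → ℝ))
    (L0 : Submodule ℝ (Fin d → ℝ)) (hL0ne : L0 ≠ ⊥)
    (hL0 : ∀ x ∈ L0, A.toLinearMap x ∈ L0)
    (lam0 ε : ℝ) (hlam0 : lam0 < 0) (hε : ε ∈ Set.Ioo 0 (-lam0))
    (G H : (Fin d → ℝ) ≃ (Fin d → ℝ)) (C : ℝ) (hC : 0 ≤ C)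
    (hconj : ∀ x, H (G x) = A (H x)) (hbd : ∀ x, ‖H x - x‖ ≤ C)
    (ρ : (Fin d → ℝ) → (Fin d → ℝ) → ℝ)
    (hρ0 : ∀ x y : Fin d → ℝ, H x ∈ L0 → H y ∈ L0 → 0 ≤ ρ x y)
    (hρ1 : ∀ x y : Fin d → ℝ, H x ∈ L0 → H y ∈ L0 → ‖x - y‖ ≤ ρ x y)
    (a0 b0 : ℝ) (ha0 : 0 < a0) (hb0 : 0 < b0)
    (hρ2 : ∀ x y : Fin d → ℝ, H x ∈ L0 → H y ∈ L0 → ρ x y ≤ a0 * ‖x - y‖ + b0)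
    (hρ3 : ∀ x y : Fin d → ℝ, H x ∈ L0 → H y ∈ L0 →
      Real.exp (lam0 - ε) * ρ x y ≤ ρ (G x) (G y) ∧
        ρ (G x) (G y) ≤ Real.exp (lam0 + ε) * ρ x y) :
    ∀ lam : ℂ, ((A.toLinearMap.restrict hL0).charpoly.map (algebraMap ℝ ℂ)).IsRoot lam →
      lam0 - ε ≤ Real.log ‖lam‖ ∧ Real.log ‖lam‖ ≤ lam0 + ε := by
  -- basic membership facts
  have hAmem : ∀ (n : ℕ) (u : Fin d → ℝ), u ∈ L0 → (A.toLinearMap ^ n) u ∈ L0 :=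
    fun n u hu => Module.End.pow_apply_mem_of_forall_mem n hL0 u hu
  have hHGn : ∀ (x : Fin d → ℝ) (n : ℕ), H (G^[n] x) = (A.toLinearMap ^ n) (H x) := by
    intro x n
    induction n with
    | zero => simp
    | succ n ih =>
      rw [Function.iterate_succ_apply', hconj, ih, pow_succ', Module.End.mul_apply]
      rfl
  have hSGmem : ∀ (x : Fin d → ℝ), H x ∈ L0 → ∀ n : ℕ, H (G^[n] x) ∈ L0 := by
    intro x hx n
    rw [hHGn]
    exact hAmem n _ hx
  -- iterated pinching of ρ
  have hρup : ∀ (x y : Fin d → ℝ), H x ∈ L0 → H y ∈ L0 → ∀ n : ℕ,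
      ρ (G^[n] x) (G^[n] y) ≤ (Real.exp (lam0 + ε)) ^ n * ρ x y := by
    intro x y hx hy n
    induction n with
    | zero => simp
    | succ n ih =>
      have h1 := (hρ3 _ _ (hSGmem x hx n) (hSGmem y hy n)).2
      rw [Function.iterate_succ_apply', Function.iterate_succ_apply']
      calc ρ (G (G^[n] x)) (G (G^[n] y)) ≤ Real.exp (lam0 + ε) * ρ (G^[n] x) (G^[n] y) := h1
        _ ≤ Real.exp (lam0 + ε) * ((Real.exp (lam0 + ε)) ^ n * ρ x y) :=
            mul_le_mul_of_nonneg_left ih (Real.exp_nonneg _)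
        _ = (Real.exp (lam0 + ε)) ^ (n + 1) * ρ x y := by ring
  have hρlo : ∀ (x y : Fin d → ℝ), H x ∈ L0 → H y ∈ L0 → ∀ n : ℕ,
      (Real.exp (lam0 - ε)) ^ n * ρ x y ≤ ρ (G^[n] x) (G^[n] y) := by
    intro x y hx hy n
    induction n with
    | zero => simp
    | succ n ih =>
      have h1 := (hρ3 _ _ (hSGmem x hx n) (hSGmem y hy n)).1
      rw [Function.iterate_succ_apply', Function.iterate_succ_apply']
      calc (Real.exp (lam0 - ε)) ^ (n + 1) * ρ x y
          = Real.exp (lam0 - ε) * ((Real.exp (lam0 - ε)) ^ n * ρ x y) := by ring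
        _ ≤ Real.exp (lam0 - ε) * ρ (G^[n] x) (G^[n] y) :=
            mul_le_mul_of_nonneg_left ih (Real.exp_nonneg _)
        _ ≤ ρ (G (G^[n] x)) (G (G^[n] y)) := h1
  -- growth estimates for A^n on L0
  have hup : ∀ v ∈ L0, ∀ n : ℕ,
      ‖(A.toLinearMap ^ n) v‖ ≤ a0 * (Real.exp (lam0 + ε)) ^ n * ‖v‖ := by
    intro v hv n
    have hE : (0:ℝ) ≤ (Real.exp (lam0 + ε)) ^ n := pow_nonneg (Real.exp_nonneg _) n
    apply aux_le_of_forall_t (D := (Real.exp (lam0 + ε)) ^ n * (2 * a0 * C + b0) + 2 * C)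
    intro t ht
    set u := t • v with hu
    have hu0 : u ∈ L0 := L0.smul_mem t hv
    set x := H.symm u with hxdef
    set y := H.symm (0 : Fin d → ℝ) with hydef
    have hx : H x = u := Equiv.apply_symm_apply H u
    have hy : H y = 0 := Equiv.apply_symm_apply H 0
    have hxL : H x ∈ L0 := by rw [hx]; exact hu0
    have hyL : H y ∈ L0 := by rw [hy]; exact L0.zero_mem
    have hxu : ‖x - u‖ ≤ C := by
      calc ‖x - u‖ = ‖H x - x‖ := by rw [hx, norm_sub_rev]
        _ ≤ C := hbd x
    have hyn : ‖y‖ ≤ C := by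
      have := hbd y
      rw [hy] at this
      calc ‖y‖ = ‖0 - y‖ := by rw [zero_sub, norm_neg]
        _ ≤ C := this
    have hxy_up : ‖x - y‖ ≤ ‖u‖ + 2 * C := by
      calc ‖x - y‖ = ‖(x - u) + (u - y)‖ := by congr 1; abel
        _ ≤ ‖x - u‖ + ‖u - y‖ := norm_add_le _ _
        _ ≤ ‖x - u‖ + (‖u‖ + ‖y‖) := by linarith [norm_sub_le u y]
        _ ≤ ‖u‖ + 2 * C := by linarith
    have hXn : H (G^[n] x) = (A.toLinearMap ^ n) u := by rw [hHGn, hx]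
    have hYn : H (G^[n] y) = 0 := by rw [hHGn, hy, map_zero]
    have hXnL : H (G^[n] x) ∈ L0 := hSGmem x hxL n
    have hYnL : H (G^[n] y) ∈ L0 := hSGmem y hyL n
    have hGn_up : ‖G^[n] x - G^[n] y‖ ≤ ρ (G^[n] x) (G^[n] y) := hρ1 _ _ hXnL hYnL
    have hρn : ρ (G^[n] x) (G^[n] y) ≤ (Real.exp (lam0 + ε)) ^ n * ρ x y := hρup x y hxL hyL n
    have hρxy : ρ x y ≤ a0 * ‖x - y‖ + b0 := hρ2 _ _ hxL hyL
    have h6 : ‖(A.toLinearMap ^ n) u‖ ≤ ‖G^[n] x - G^[n] y‖ + 2 * C := by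
      have e1 : ‖H (G^[n] x) - G^[n] x‖ ≤ C := hbd _
      have e2 : ‖H (G^[n] y) - G^[n] y‖ ≤ C := hbd _
      have e2' : ‖G^[n] y - H (G^[n] y)‖ ≤ C := by rwa [norm_sub_rev]
      calc ‖(A.toLinearMap ^ n) u‖ = ‖H (G^[n] x) - H (G^[n] y)‖ := by
            rw [hXn, hYn, sub_zero]
        _ = ‖(H (G^[n] x) - G^[n] x) + (G^[n] x - G^[n] y) + (G^[n] y - H (G^[n] y))‖ := by
            congr 1; abel
        _ ≤ ‖(H (G^[n] x) - G^[n] x) + (G^[n] x - G^[n] y)‖ + ‖G^[n] y - H (G^[n] y)‖ :=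
            norm_add_le _ _
        _ ≤ (‖H (G^[n] x) - G^[n] x‖ + ‖G^[n] x - G^[n] y‖) + ‖G^[n] y - H (G^[n] y)‖ := by
            linarith [norm_add_le (H (G^[n] x) - G^[n] x) (G^[n] x - G^[n] y)]
        _ ≤ ‖G^[n] x - G^[n] y‖ + 2 * C := by linarith
    have hTn : ‖(A.toLinearMap ^ n) u‖ = t * ‖(A.toLinearMap ^ n) v‖ := by
      rw [hu, _root_.map_smul, norm_smul, Real.norm_eq_abs, abs_of_pos ht]
    have hun : ‖u‖ = t * ‖v‖ := by
      rw [hu, norm_smul, Real.norm_eq_abs, abs_of_pos ht]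
    have step1 : (Real.exp (lam0 + ε)) ^ n * ρ x y
        ≤ (Real.exp (lam0 + ε)) ^ n * (a0 * ‖x - y‖ + b0) :=
      mul_le_mul_of_nonneg_left hρxy hE
    have step2 : a0 * ‖x - y‖ ≤ a0 * (t * ‖v‖ + 2 * C) := by
      apply mul_le_mul_of_nonneg_left _ ha0.le
      rw [← hun]
      exact hxy_up
    have step3 : (Real.exp (lam0 + ε)) ^ n * (a0 * ‖x - y‖ + b0)
        ≤ (Real.exp (lam0 + ε)) ^ n * (a0 * (t * ‖v‖ + 2 * C) + b0) := by
      apply mul_le_mul_of_nonneg_left _ hE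
      linarith
    calc t * ‖(A.toLinearMap ^ n) v‖ = ‖(A.toLinearMap ^ n) u‖ := hTn.symm
      _ ≤ ‖G^[n] x - G^[n] y‖ + 2 * C := h6
      _ ≤ ρ (G^[n] x) (G^[n] y) + 2 * C := by linarith
      _ ≤ (Real.exp (lam0 + ε)) ^ n * ρ x y + 2 * C := by linarith
      _ ≤ (Real.exp (lam0 + ε)) ^ n * (a0 * (t * ‖v‖ + 2 * C) + b0) + 2 * C := by linarith
      _ = t * (a0 * (Real.exp (lam0 + ε)) ^ n * ‖v‖)
            + ((Real.exp (lam0 + ε)) ^ n * (2 * a0 * C + b0) + 2 * C) := by ring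
  have hlo : ∀ v ∈ L0, ∀ n : ℕ,
      (Real.exp (lam0 - ε)) ^ n * ‖v‖ ≤ a0 * ‖(A.toLinearMap ^ n) v‖ := by
    intro v hv n
    have hE : (0:ℝ) ≤ (Real.exp (lam0 - ε)) ^ n := pow_nonneg (Real.exp_nonneg _) n
    apply aux_le_of_forall_t
      (D := (Real.exp (lam0 - ε)) ^ n * 2 * C + 2 * a0 * C + b0)
    intro t ht
    set u := t • v with hu
    have hu0 : u ∈ L0 := L0.smul_mem t hv
    set x := H.symm u with hxdef
    set y := H.symm (0 : Fin d → ℝ) with hydef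
    have hx : H x = u := Equiv.apply_symm_apply H u
    have hy : H y = 0 := Equiv.apply_symm_apply H 0
    have hxL : H x ∈ L0 := by rw [hx]; exact hu0
    have hyL : H y ∈ L0 := by rw [hy]; exact L0.zero_mem
    have hxu : ‖u - x‖ ≤ C := by
      calc ‖u - x‖ = ‖H x - x‖ := by rw [hx]
        _ ≤ C := hbd x
    have hyn : ‖y‖ ≤ C := by
      have := hbd y
      rw [hy] at this
      calc ‖y‖ = ‖0 - y‖ := by rw [zero_sub, norm_neg]
        _ ≤ C := this
    have hxy_lo : ‖u‖ ≤ ‖x - y‖ + 2 * C := by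
      calc ‖u‖ = ‖(u - x) + (x - y) + y‖ := by congr 1; abel
        _ ≤ ‖(u - x) + (x - y)‖ + ‖y‖ := norm_add_le _ _
        _ ≤ (‖u - x‖ + ‖x - y‖) + ‖y‖ := by linarith [norm_add_le (u - x) (x - y)]
        _ ≤ ‖x - y‖ + 2 * C := by linarith
    have hXn : H (G^[n] x) = (A.toLinearMap ^ n) u := by rw [hHGn, hx]
    have hYn : H (G^[n] y) = 0 := by rw [hHGn, hy, map_zero]
    have hXnL : H (G^[n] x) ∈ L0 := hSGmem x hxL n
    have hYnL : H (G^[n] y) ∈ L0 := hSGmem y hyL n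
    have hρn : (Real.exp (lam0 - ε)) ^ n * ρ x y ≤ ρ (G^[n] x) (G^[n] y) := hρlo x y hxL hyL n
    have hρxy : ‖x - y‖ ≤ ρ x y := hρ1 _ _ hxL hyL
    have hGn : ρ (G^[n] x) (G^[n] y) ≤ a0 * ‖G^[n] x - G^[n] y‖ + b0 := hρ2 _ _ hXnL hYnL
    have h6 : ‖G^[n] x - G^[n] y‖ ≤ ‖(A.toLinearMap ^ n) u‖ + 2 * C := by
      have e1 : ‖G^[n] x - H (G^[n] x)‖ ≤ C := by rw [norm_sub_rev]; exact hbd _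
      have e2 : ‖H (G^[n] y) - G^[n] y‖ ≤ C := hbd _
      calc ‖G^[n] x - G^[n] y‖
          = ‖(G^[n] x - H (G^[n] x)) + (H (G^[n] x) - H (G^[n] y)) + (H (G^[n] y) - G^[n] y)‖ := by
            congr 1; abel
        _ ≤ ‖(G^[n] x - H (G^[n] x)) + (H (G^[n] x) - H (G^[n] y))‖ + ‖H (G^[n] y) - G^[n] y‖ :=
            norm_add_le _ _
        _ ≤ (‖G^[n] x - H (G^[n] x)‖ + ‖H (G^[n] x) - H (G^[n] y)‖) + ‖H (G^[n] y) - G^[n] y‖ := by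
            linarith [norm_add_le (G^[n] x - H (G^[n] x)) (H (G^[n] x) - H (G^[n] y))]
        _ ≤ ‖H (G^[n] x) - H (G^[n] y)‖ + 2 * C := by linarith
        _ = ‖(A.toLinearMap ^ n) u‖ + 2 * C := by rw [hXn, hYn, sub_zero]
    have hTn : ‖(A.toLinearMap ^ n) u‖ = t * ‖(A.toLinearMap ^ n) v‖ := by
      rw [hu, _root_.map_smul, norm_smul, Real.norm_eq_abs, abs_of_pos ht]
    have hun : ‖u‖ = t * ‖v‖ := by
      rw [hu, norm_smul, Real.norm_eq_abs, abs_of_pos ht]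
    have step1 : (Real.exp (lam0 - ε)) ^ n * ‖u‖
        ≤ (Real.exp (lam0 - ε)) ^ n * (‖x - y‖ + 2 * C) :=
      mul_le_mul_of_nonneg_left hxy_lo hE
    have step2 : (Real.exp (lam0 - ε)) ^ n * ‖x - y‖ ≤ (Real.exp (lam0 - ε)) ^ n * ρ x y :=
      mul_le_mul_of_nonneg_left hρxy hE
    have step3 : a0 * ‖G^[n] x - G^[n] y‖ ≤ a0 * (‖(A.toLinearMap ^ n) u‖ + 2 * C) :=
      mul_le_mul_of_nonneg_left h6 ha0.le
    calc t * ((Real.exp (lam0 - ε)) ^ n * ‖v‖)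
        = (Real.exp (lam0 - ε)) ^ n * ‖u‖ := by rw [hun]; ring
      _ ≤ (Real.exp (lam0 - ε)) ^ n * (‖x - y‖ + 2 * C) := step1
      _ = (Real.exp (lam0 - ε)) ^ n * ‖x - y‖ + (Real.exp (lam0 - ε)) ^ n * 2 * C := by ring
      _ ≤ (Real.exp (lam0 - ε)) ^ n * ρ x y + (Real.exp (lam0 - ε)) ^ n * 2 * C := by linarith
      _ ≤ ρ (G^[n] x) (G^[n] y) + (Real.exp (lam0 - ε)) ^ n * 2 * C := by linarith
      _ ≤ (a0 * ‖G^[n] x - G^[n] y‖ + b0) + (Real.exp (lam0 - ε)) ^ n * 2 * C := by linarith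
      _ ≤ (a0 * (‖(A.toLinearMap ^ n) u‖ + 2 * C) + b0) + (Real.exp (lam0 - ε)) ^ n * 2 * C := by
          linarith
      _ = t * (a0 * ‖(A.toLinearMap ^ n) v‖)
            + ((Real.exp (lam0 - ε)) ^ n * 2 * C + 2 * a0 * C + b0) := by
          rw [hTn]; ring
  -- invariance under A⁻¹
  have hmapEq : L0.map A.toLinearMap = L0 := by
    apply Submodule.eq_of_le_of_finrank_le
    · rintro _ ⟨x, hx, rfl⟩
      exact hL0 x hx
    · rw [LinearEquiv.finrank_map_eq]
  have hL0' : ∀ x ∈ L0, A.symm.toLinearMap x ∈ L0 := by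
    intro x hx
    rw [← hmapEq] at hx
    obtain ⟨y, hy, rfl⟩ := hx
    simpa using hy
  have hTT' : ∀ (n : ℕ) (u : Fin d → ℝ),
      (A.toLinearMap ^ n) ((A.symm.toLinearMap ^ n) u) = u := by
    intro n
    induction n with
    | zero => simp
    | succ n ih =>
      intro u
      rw [pow_succ A.toLinearMap n, pow_succ' A.symm.toLinearMap n]
      simp only [Module.End.mul_apply]
      have : A.toLinearMap (A.symm.toLinearMap ((A.symm.toLinearMap ^ n) u))
          = (A.symm.toLinearMap ^ n) u := by simp
      rw [this]
      exact ih u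
  have hup' : ∀ v ∈ L0, ∀ n : ℕ,
      ‖(A.symm.toLinearMap ^ n) v‖ ≤ a0 * (Real.exp (-(lam0 - ε))) ^ n * ‖v‖ := by
    intro v hv n
    have hmem : (A.symm.toLinearMap ^ n) v ∈ L0 :=
      Module.End.pow_apply_mem_of_forall_mem n hL0' v hv
    have h1 := hlo _ hmem n
    rw [hTT'] at h1
    have hP : (0:ℝ) < (Real.exp (lam0 - ε)) ^ n := pow_pos (Real.exp_pos _) n
    have he : (Real.exp (-(lam0 - ε))) ^ n = ((Real.exp (lam0 - ε)) ^ n)⁻¹ := by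
      rw [Real.exp_neg, inv_pow]
    rw [he]
    rw [mul_comm ((Real.exp (lam0 - ε)) ^ n) ‖(A.symm.toLinearMap ^ n) v‖] at h1
    calc ‖(A.symm.toLinearMap ^ n) v‖
        = ‖(A.symm.toLinearMap ^ n) v‖ * (Real.exp (lam0 - ε)) ^ n
            * ((Real.exp (lam0 - ε)) ^ n)⁻¹ := by
          field_simp
      _ ≤ a0 * ‖v‖ * ((Real.exp (lam0 - ε)) ^ n)⁻¹ := by
          apply mul_le_mul_of_nonneg_right h1 (by positivity)
      _ = a0 * ((Real.exp (lam0 - ε)) ^ n)⁻¹ * ‖v‖ := by ring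
  
  -- matrix setup
  let b : Module.Basis (Fin (Module.finrank ℝ L0)) ℝ L0 := Module.finBasis ℝ L0
  set f : L0 →ₗ[ℝ] L0 := A.toLinearMap.restrict hL0 with hf
  set f' : L0 →ₗ[ℝ] L0 := A.symm.toLinearMap.restrict hL0' with hf'
  set Mx : Matrix (Fin (Module.finrank ℝ L0)) (Fin (Module.finrank ℝ L0)) ℝ
    := LinearMap.toMatrix b b f with hMx
  set Mx' : Matrix (Fin (Module.finrank ℝ L0)) (Fin (Module.finrank ℝ L0)) ℝ
    := LinearMap.toMatrix b b f' with hMx'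
  have hMn : ∀ n : ℕ, Mx ^ n = LinearMap.toMatrix b b (f ^ n) := by
    intro n
    induction n with
    | zero => rw [pow_zero, pow_zero, Module.End.one_eq_id, LinearMap.toMatrix_id]
    | succ n ih =>
      rw [pow_succ, pow_succ, ih, Module.End.mul_eq_comp, LinearMap.toMatrix_comp b b b]
  have hM'n : ∀ n : ℕ, Mx' ^ n = LinearMap.toMatrix b b (f' ^ n) := by
    intro n
    induction n with
    | zero => rw [pow_zero, pow_zero, Module.End.one_eq_id, LinearMap.toMatrix_id]
    | succ n ih =>
      rw [pow_succ, pow_succ, ih, Module.End.mul_eq_comp, LinearMap.toMatrix_comp b b b]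
  have hfn : ∀ (n : ℕ) (z : L0), (((f ^ n) z : L0) : Fin d → ℝ)
      = (A.toLinearMap ^ n) ((z : L0) : Fin d → ℝ) := by
    intro n z
    rw [hf, Module.End.pow_restrict]
    exact LinearMap.restrict_coe_apply _ _ _
  have hf'n : ∀ (n : ℕ) (z : L0), (((f' ^ n) z : L0) : Fin d → ℝ)
      = (A.symm.toLinearMap ^ n) ((z : L0) : Fin d → ℝ) := by
    intro n z
    rw [hf', Module.End.pow_restrict]
    exact LinearMap.restrict_coe_apply _ _ _
  -- coordinate functional bound
  let ecl : L0 →L[ℝ] (Fin (Module.finrank ℝ L0) → ℝ) :=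
    LinearMap.toContinuousLinearMap b.equivFun.toLinearMap
  have hcoord : ∀ (z : L0) (i : Fin (Module.finrank ℝ L0)), |b.repr z i| ≤ ‖ecl‖ * ‖z‖ := by
    intro z i
    have h3 : (ecl z) i = b.repr z i := by
      simp [ecl, LinearMap.coe_toContinuousLinearMap', Module.Basis.equivFun_apply]
    have h2 := norm_le_pi_norm (ecl z) i
    rw [h3] at h2
    have h1 : |b.repr z i| ≤ ‖ecl z‖ := by simpa [Real.norm_eq_abs] using h2
    exact h1.trans (ecl.le_opNorm z)
  set B : ℝ := (∑ j : Fin (Module.finrank ℝ L0), ‖(b j : L0)‖) + 1 with hB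
  have hBj : ∀ j, ‖(b j : L0)‖ ≤ B := by
    intro j
    rw [hB]
    have := Finset.single_le_sum (f := fun j => ‖(b j : L0)‖)
      (fun i _ => norm_nonneg _) (Finset.mem_univ j)
    linarith
  -- entry bounds
  have hMent : ∀ n : ℕ, 1 ≤ n → ∀ i j,
      |(Mx ^ n) i j| ≤ (‖ecl‖ * a0 * B) * (Real.exp (lam0 + ε)) ^ n := by
    intro n _ i j
    rw [hMn n, LinearMap.toMatrix_apply]
    have h1 := hcoord ((f ^ n) (b j)) i
    have hEn : (0:ℝ) ≤ (Real.exp (lam0 + ε)) ^ n := pow_nonneg (Real.exp_nonneg _) n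
    have h2 : ‖(f ^ n) (b j)‖ ≤ a0 * (Real.exp (lam0 + ε)) ^ n * ‖(b j : L0)‖ := by
      have h4 := hup ((b j : L0) : Fin d → ℝ) (b j).2 n
      calc ‖(f ^ n) (b j)‖ = ‖(((f ^ n) (b j) : L0) : Fin d → ℝ)‖ :=
            (Submodule.norm_coe _).symm
        _ = ‖(A.toLinearMap ^ n) (((b j : L0)) : Fin d → ℝ)‖ := by rw [hfn]
        _ ≤ a0 * (Real.exp (lam0 + ε)) ^ n * ‖(((b j : L0)) : Fin d → ℝ)‖ := h4
        _ = a0 * (Real.exp (lam0 + ε)) ^ n * ‖(b j : L0)‖ := by rw [Submodule.norm_coe]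
    have h5 : ‖(b j : L0)‖ ≤ B := hBj j
    have h6 : (0:ℝ) ≤ ‖ecl‖ := ContinuousLinearMap.opNorm_nonneg ecl
    have h7 : ‖ecl‖ * ‖(f ^ n) (b j)‖ ≤ ‖ecl‖ * (a0 * (Real.exp (lam0 + ε)) ^ n * ‖(b j : L0)‖) :=
      mul_le_mul_of_nonneg_left h2 h6
    have h8 : a0 * (Real.exp (lam0 + ε)) ^ n * ‖(b j : L0)‖
        ≤ a0 * (Real.exp (lam0 + ε)) ^ n * B := by
      apply mul_le_mul_of_nonneg_left h5 (by positivity)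
    have h9 : ‖ecl‖ * (a0 * (Real.exp (lam0 + ε)) ^ n * ‖(b j : L0)‖)
        ≤ ‖ecl‖ * (a0 * (Real.exp (lam0 + ε)) ^ n * B) := mul_le_mul_of_nonneg_left h8 h6
    calc |b.repr ((f ^ n) (b j)) i| ≤ ‖ecl‖ * ‖(f ^ n) (b j)‖ := h1
      _ ≤ ‖ecl‖ * (a0 * (Real.exp (lam0 + ε)) ^ n * B) := le_trans h7 h9
      _ = (‖ecl‖ * a0 * B) * (Real.exp (lam0 + ε)) ^ n := by ring
  have hM'ent : ∀ n : ℕ, 1 ≤ n → ∀ i j,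
      |(Mx' ^ n) i j| ≤ (‖ecl‖ * a0 * B) * (Real.exp (-(lam0 - ε))) ^ n := by
    intro n _ i j
    rw [hM'n n, LinearMap.toMatrix_apply]
    have h1 := hcoord ((f' ^ n) (b j)) i
    have h2 : ‖(f' ^ n) (b j)‖ ≤ a0 * (Real.exp (-(lam0 - ε))) ^ n * ‖(b j : L0)‖ := by
      have h4 := hup' ((b j : L0) : Fin d → ℝ) (b j).2 n
      calc ‖(f' ^ n) (b j)‖ = ‖(((f' ^ n) (b j) : L0) : Fin d → ℝ)‖ :=
            (Submodule.norm_coe _).symm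
        _ = ‖(A.symm.toLinearMap ^ n) (((b j : L0)) : Fin d → ℝ)‖ := by rw [hf'n]
        _ ≤ a0 * (Real.exp (-(lam0 - ε))) ^ n * ‖(((b j : L0)) : Fin d → ℝ)‖ := h4
        _ = a0 * (Real.exp (-(lam0 - ε))) ^ n * ‖(b j : L0)‖ := by rw [Submodule.norm_coe]
    have h5 : ‖(b j : L0)‖ ≤ B := hBj j
    have h6 : (0:ℝ) ≤ ‖ecl‖ := ContinuousLinearMap.opNorm_nonneg ecl
    have h7 : ‖ecl‖ * ‖(f' ^ n) (b j)‖
        ≤ ‖ecl‖ * (a0 * (Real.exp (-(lam0 - ε))) ^ n * ‖(b j : L0)‖) :=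
      mul_le_mul_of_nonneg_left h2 h6
    have h8 : a0 * (Real.exp (-(lam0 - ε))) ^ n * ‖(b j : L0)‖
        ≤ a0 * (Real.exp (-(lam0 - ε))) ^ n * B := by
      apply mul_le_mul_of_nonneg_left h5 (by positivity)
    have h9 : ‖ecl‖ * (a0 * (Real.exp (-(lam0 - ε))) ^ n * ‖(b j : L0)‖)
        ≤ ‖ecl‖ * (a0 * (Real.exp (-(lam0 - ε))) ^ n * B) := mul_le_mul_of_nonneg_left h8 h6
    calc |b.repr ((f' ^ n) (b j)) i| ≤ ‖ecl‖ * ‖(f' ^ n) (b j)‖ := h1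
      _ ≤ ‖ecl‖ * (a0 * (Real.exp (-(lam0 - ε))) ^ n * B) := le_trans h7 h9
      _ = (‖ecl‖ * a0 * B) * (Real.exp (-(lam0 - ε))) ^ n := by ring
  -- the root gives an eigenvector of the complexified matrix
  intro lam hroot
  have hcp : f.charpoly = Mx.charpoly := (LinearMap.charpoly_toMatrix f b).symm
  have hroot2 : ((Mx.map (algebraMap ℝ ℂ)).charpoly).IsRoot lam := by
    rw [Matrix.charpoly_map]
    rw [hcp] at hroot
    exact hroot
  set Mc : Matrix (Fin (Module.finrank ℝ L0)) (Fin (Module.finrank ℝ L0)) ℂ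
    := Mx.map (algebraMap ℝ ℂ) with hMc
  set Mc' : Matrix (Fin (Module.finrank ℝ L0)) (Fin (Module.finrank ℝ L0)) ℂ
    := Mx'.map (algebraMap ℝ ℂ) with hMc'
  have hdet : (Matrix.diagonal (fun _ : Fin (Module.finrank ℝ L0) => lam) - Mc).det = 0 := by
    have h1 : (Mc.charpoly).eval lam = 0 := hroot2
    have h2 : (Mc.charpoly).eval lam = ((Mc.charmatrix).map (Polynomial.evalRingHom lam)).det := by
      rw [Matrix.charpoly, ← Polynomial.coe_evalRingHom]
      exact RingHom.map_det _ _
    have h3 : (Mc.charmatrix).map (Polynomial.evalRingHom lam)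
        = Matrix.diagonal (fun _ : Fin (Module.finrank ℝ L0) => lam) - Mc := by
      ext i j
      by_cases h : i = j <;>
        simp [h, Matrix.charmatrix_apply, Matrix.map_apply, Matrix.sub_apply,
          Matrix.diagonal_apply]
    rw [h2, h3] at h1
    exact h1
  obtain ⟨v, hv0, hveq⟩ := Matrix.exists_mulVec_eq_zero_iff.2 hdet
  have hev : Mc *ᵥ v = lam • v := by
    have h4 : Matrix.diagonal (fun _ : Fin (Module.finrank ℝ L0) => lam) *ᵥ v - Mc *ᵥ v = 0 := by
      rw [← Matrix.sub_mulVec]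
      exact hveq
    have h5 : Matrix.diagonal (fun _ : Fin (Module.finrank ℝ L0) => lam) *ᵥ v = lam • v := by
      funext i
      simp [Matrix.mulVec_diagonal]
    rw [h5] at h4
    exact (sub_eq_zero.1 h4).symm
  -- inverse relation
  have hff' : f' * f = 1 := by
    apply LinearMap.ext
    intro z
    refine Subtype.ext ?_
    simp only [Module.End.mul_apply, hf, hf', LinearMap.restrict_coe_apply,
      Module.End.one_apply]
    simp
  have hMM : Mx' * Mx = 1 := by
    rw [hMx, hMx', ← LinearMap.toMatrix_comp b b b, ← Module.End.mul_eq_comp, hff',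
      Module.End.one_eq_id, LinearMap.toMatrix_id]
  have hinv : ∀ w : Fin (Module.finrank ℝ L0) → ℂ, Mc' *ᵥ (Mc *ᵥ w) = w := by
    intro w
    rw [Matrix.mulVec_mulVec, hMc, hMc', ← Matrix.map_mul, hMM,
      Matrix.map_one _ (map_zero _) (map_one _), Matrix.one_mulVec]
  have hlamne : lam ≠ 0 := by
    intro h0
    rw [h0, zero_smul] at hev
    have h1 := hinv v
    rw [hev, Matrix.mulVec_zero] at h1
    exact hv0 h1.symm
  have hev' : Mc' *ᵥ v = lam⁻¹ • v := by
    have h1 := hinv v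
    rw [hev, Matrix.mulVec_smul] at h1
    calc Mc' *ᵥ v = (lam⁻¹ * lam) • (Mc' *ᵥ v) := by rw [inv_mul_cancel₀ hlamne, one_smul]
      _ = lam⁻¹ • (lam • (Mc' *ᵥ v)) := by rw [← smul_smul]
      _ = lam⁻¹ • v := by rw [h1]
  -- eigenvalue bounds
  have habs_up : ‖lam‖ ≤ Real.exp (lam0 + ε) :=
    aux_eigen_bound Mx lam v hv0 hev (Real.exp_pos _) hMent
  have habs_lo' : ‖lam⁻¹‖ ≤ Real.exp (-(lam0 - ε)) :=
    aux_eigen_bound Mx' lam⁻¹ v hv0 hev' (Real.exp_pos _) hM'ent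
  have habspos : 0 < ‖lam‖ := norm_pos_iff.2 hlamne
  have habs_lo : Real.exp (lam0 - ε) ≤ ‖lam‖ := by
    rw [norm_inv, Real.exp_neg] at habs_lo'
    have e1 : (‖lam‖)⁻¹ * (‖lam‖) = 1 := inv_mul_cancel₀ habspos.ne'
    have e2 : (Real.exp (lam0 - ε))⁻¹ * (Real.exp (lam0 - ε)) = 1 :=
      inv_mul_cancel₀ (Real.exp_pos _).ne'
    nlinarith [mul_le_mul_of_nonneg_right habs_lo'
      (mul_nonneg habspos.le (Real.exp_pos (lam0 - ε)).le),
      Real.exp_pos (lam0 - ε), habspos]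
  constructor
  · rw [Real.le_log_iff_exp_le habspos]
    exact habs_lo
  · rw [Real.log_le_iff_le_exp habspos]
    exact habs_up
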